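/- In the bivariate log-linear setup, for any p₁ ∈ Δ^{d₁−1} and any minimizer r*(p₁) = (ρ*, b₂*) ∈ Δ^{d₂} of F(·, p₁) over a feasible subset of Δ^{d₂}, writing q*(p₁) := Φ_{p₁}(r*(p₁)), the gradient of F(r, p₁) in r = (ρ, b₂) at r*(p₁) satisfies ‖∇_r F(r*(p₁), p₁)‖ ≤ F̄(q*(p₁)) · ‖ |A₁ p₁| + α_comp ‖, where A₁ ∈ ℝ^{n×d₁} is the matrix whose i-th row is A_{i,1}, |A₁ p₁| ∈ ℝ^n is the componentwise absolute value of A₁ p₁, and ‖·‖ is the Euclidean norm on ℝ^n (Lemma bounding ‖∇_r F‖). -/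

import Mathlib

noncomputable section
open scoped RealInnerProductSpace BigOperators

/-- Euclidean space `ℝ^m`. -/
abbrev Euc (m : ℕ) := EuclideanSpace ℝ (Fin m)

/-- Build a vector of `ℝ^m` from its coordinates. -/
def vecOf {m : ℕ} (f : Fin m → ℝ) : Euc m := (WithLp.equiv 2 _).symm f

/-- The probability simplex in `ℝ^m`. -/
def probSimplex (m : ℕ) : Set (Euc m) := {p | (∀ i, 0 ≤ p i) ∧ ∑ i, p i = 1}

/-- A point of the collapsed space `ℝ^{1+d₂}` from `(ρ, b₂)`; coordinate `0` is `ρ`. -/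
def pairR {d₂ : ℕ} (ρ : ℝ) (b₂ : Fin d₂ → ℝ) : Euc (d₂ + 1) := vecOf (Fin.cons ρ b₂)

/-- The collapsed simplex `Δ^{d₂} = {(ρ, b₂) : ρ ≥ 0, b₂ ≥ 0, ρ + Σ_j (b₂)_j = 1}`. -/
def collapsedSimplex (d₂ : ℕ) : Set (Euc (d₂ + 1)) := probSimplex (d₂ + 1)

/-- A point of the full space `ℝ^{d₁+d₂}` from its two blocks of coordinates. -/
def pairQ {d₁ d₂ : ℕ} (x : Fin d₁ → ℝ) (y : Fin d₂ → ℝ) : Euc (d₁ + d₂) :=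
  vecOf (Fin.append x y)

/-- The expansion map `Φ_{p₁}(ρ, b₂) = (ρ·p₁, b₂)`. -/
def Phi {d₁ d₂ : ℕ} (p₁ : Euc d₁) (r : Euc (d₂ + 1)) : Euc (d₁ + d₂) :=
  pairQ (fun j => r 0 * p₁ j) (fun j => r j.succ)

variable {n d₁ d₂ : ℕ}

/-- `⟨A_i, q⟩` where `A_i = (A_{i,1}, A_{i,2})`. -/
def innerA (A₁ : Fin n → Euc d₁) (A₂ : Fin n → Euc d₂) (i : Fin n) (q : Euc (d₁ + d₂)) : ℝ :=
  ⟪pairQ (A₁ i) (A₂ i), q⟫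

/-- `F̄(q) = (1/n)·Σ_i exp(⟨A_i, q⟩)`. -/
def Fbar (A₁ : Fin n → Euc d₁) (A₂ : Fin n → Euc d₂) (q : Euc (d₁ + d₂)) : ℝ :=
  (1 / (n : ℝ)) * ∑ i, Real.exp (innerA A₁ A₂ i q)

/-- `F(q) = (1/n)·Σ_i (c_i + exp(⟨A_i, q⟩))`. -/
def Ffull (c : Fin n → ℝ) (A₁ : Fin n → Euc d₁) (A₂ : Fin n → Euc d₂)
    (q : Euc (d₁ + d₂)) : ℝ :=
  (1 / (n : ℝ)) * ∑ i, (c i + Real.exp (innerA A₁ A₂ i q))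

/-- The bivariate objective `F(r, p₁) := F(Φ_{p₁}(r))`. -/
def Fb (c : Fin n → ℝ) (A₁ : Fin n → Euc d₁) (A₂ : Fin n → Euc d₂)
    (r : Euc (d₂ + 1)) (p₁ : Euc d₁) : ℝ :=
  Ffull c A₁ A₂ (Phi p₁ r)

/-- The inner product `⟨A_i, Φ_{p₁}(r)⟩` is linear in `r`, with "weight" vector
`w i = (⟪A₁ i, p₁⟫, A₂ i)`. -/
lemma inner_phi_eq (A₁ : Fin n → Euc d₁) (A₂ : Fin n → Euc d₂)
    (p₁ : Euc d₁) (i : Fin n) (r : Euc (d₂ + 1)) :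
    innerA A₁ A₂ i (Phi p₁ r) = ⟪pairR (⟪A₁ i, p₁⟫) (fun j => A₂ i j), r⟫ := by
  simp only [innerA, Phi, pairQ, pairR, vecOf, PiLp.inner_apply, RCLike.inner_apply,
    conj_trivial, WithLp.equiv_symm_apply, WithLp.ofLp_toLp, Fin.sum_univ_add, Fin.append_left,
    Fin.append_right, Fin.sum_univ_succ, Fin.cons_zero, Fin.cons_succ]
  rw [Finset.mul_sum]
  have h1 : ∑ x : Fin d₁, r 0 * p₁ x * A₁ i x = ∑ x : Fin d₁, r 0 * (p₁ x * A₁ i x) :=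
    Finset.sum_congr rfl fun j _ => by ring
  rw [h1]

lemma sqrt_sq_add_sq_le (x y : ℝ) (hx : 0 ≤ x) (hy : 0 ≤ y) :
    Real.sqrt (x ^ 2 + y ^ 2) ≤ x + y := by
  have h : x ^ 2 + y ^ 2 ≤ (x + y) ^ 2 := by nlinarith
  calc Real.sqrt (x ^ 2 + y ^ 2) ≤ Real.sqrt ((x + y) ^ 2) := Real.sqrt_le_sqrt h
    _ = x + y := Real.sqrt_sq (by linarith)

lemma norm_pairR_le (a : ℝ) (b : Fin d₂ → ℝ) :
    ‖pairR a b‖ ≤ |a| + ‖vecOf b‖ := by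
  rw [pairR, vecOf, EuclideanSpace.norm_eq]
  simp only [WithLp.equiv_symm_apply, WithLp.ofLp_toLp, Fin.sum_univ_succ, Fin.cons_zero, Fin.cons_succ,
    Real.norm_eq_abs, sq_abs]
  have : ‖vecOf b‖ = Real.sqrt (∑ j : Fin d₂, (b j) ^ 2) := by
    rw [vecOf, EuclideanSpace.norm_eq]
    simp [sq_abs]
  rw [this]
  have h := sqrt_sq_add_sq_le |a| (Real.sqrt (∑ j : Fin d₂, (b j) ^ 2)) (abs_nonneg a)
    (Real.sqrt_nonneg _)
  rw [Real.sq_sqrt (Finset.sum_nonneg fun j _ => sq_nonneg _), sq_abs] at h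
  exact h

/-- Each coordinate of a vector with nonnegative coordinates is at most its norm. -/
lemma coord_le_norm {m : ℕ} (f : Fin m → ℝ) (i : Fin m) : |f i| ≤ ‖vecOf f‖ := by
  rw [vecOf, EuclideanSpace.norm_eq]
  simp only [WithLp.equiv_symm_apply, WithLp.ofLp_toLp, Real.norm_eq_abs, sq_abs]
  calc |f i| = Real.sqrt ((f i) ^ 2) := (Real.sqrt_sq_eq_abs _).symm
    _ ≤ Real.sqrt (∑ j, (f j) ^ 2) :=
      Real.sqrt_le_sqrt (Finset.single_le_sum (fun j _ => sq_nonneg (f j)) (Finset.mem_univ i))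

/-- **Lemma (bound on `‖∇_r F‖` in the bivariate log-linear setup).**
For `p₁ ∈ Δ^{d₁−1}` and a minimizer `r* = (ρ*, b₂*)` of `F(·, p₁)` over a feasible subset of
the collapsed simplex `Δ^{d₂}`, with `q*(p₁) = Φ_{p₁}(r*)`, one has
`‖∇_r F(r*, p₁)‖ ≤ F̄(q*(p₁)) · ‖ |A₁ p₁| + α_comp ‖`. -/
theorem grad_r_bound
    {n d₁ d₂ : ℕ} (hn : 0 < n) (hd₁ : 0 < d₁)
    (c : Fin n → ℝ) (hc : ∀ i, 0 < c i)
    (A₁ : Fin n → Euc d₁) (A₂ : Fin n → Euc d₂)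
    {p₁ : Euc d₁} (hp₁ : p₁ ∈ probSimplex d₁)
    {S : Set (Euc (d₂ + 1))} (hS : S ⊆ collapsedSimplex d₂)
    {rstar : Euc (d₂ + 1)} (hrS : rstar ∈ S)
    (hmin : IsMinOn (fun r => Fb c A₁ A₂ r p₁) S rstar) :
    ‖gradient (fun r => Fb c A₁ A₂ r p₁) rstar‖ ≤
      Fbar A₁ A₂ (Phi p₁ rstar) * ‖vecOf (fun i => |⟪A₁ i, p₁⟫| + ‖A₂ i‖)‖ := by
  classical
  set w : Fin n → Euc (d₂ + 1) := fun i => pairR (⟪A₁ i, p₁⟫) (fun j => A₂ i j) with hw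
  set e : Fin n → ℝ := fun i => Real.exp ⟪w i, rstar⟫ with he
  set g : Euc (d₂ + 1) := (1 / (n : ℝ)) • ∑ i, e i • w i with hg
  set N : ℝ := ‖vecOf (fun i => |⟪A₁ i, p₁⟫| + ‖A₂ i‖)‖ with hN
  have hf : (fun r => Fb c A₁ A₂ r p₁)
      = fun r => (1 / (n : ℝ)) * ∑ i, (c i + Real.exp ⟪w i, r⟫) := by
    funext r
    simp only [Fb, Ffull, inner_phi_eq, hw]
  have hgrad : HasGradientAt (fun r => Fb c A₁ A₂ r p₁) g rstar := by
    rw [hasGradientAt_iff_hasFDerivAt, hf]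
    have hD : ∀ i : Fin n, HasFDerivAt (fun r : Euc (d₂ + 1) => c i + Real.exp ⟪w i, r⟫)
        (e i • innerSL ℝ (w i)) rstar :=
      fun i => ((innerSL ℝ (w i)).hasFDerivAt.exp).const_add (c i)
    have hsum := (HasFDerivAt.fun_sum (fun i (_ : i ∈ Finset.univ) => hD i)).const_mul (1 / (n : ℝ))
    convert hsum using 1
    · rfl
    refine ContinuousLinearMap.ext fun v => ?_
    simp only [hg, map_smul, map_sum, ContinuousLinearMap.smul_apply,
      ContinuousLinearMap.coe_sum', Finset.sum_apply, InnerProductSpace.toDual_apply_apply,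
      innerSL_apply_apply, smul_eq_mul]

  rw [hgrad.gradient]
  have hwle : ∀ i, ‖w i‖ ≤ N := by
    intro i
    refine le_trans (norm_pairR_le _ _) ?_
    have h1 : ‖vecOf (fun j => A₂ i j)‖ = ‖A₂ i‖ := by
      congr 1
    have h2 := coord_le_norm (fun i => |⟪A₁ i, p₁⟫| + ‖A₂ i‖) i
    rw [abs_of_nonneg (by positivity)] at h2
    rw [h1]
    exact h2
  have hFbar : Fbar A₁ A₂ (Phi p₁ rstar) = (1 / (n : ℝ)) * ∑ i, e i := by
    simp only [Fbar, inner_phi_eq, he, hw]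
  have hNnonneg : 0 ≤ N := norm_nonneg _
  have hninv : (0 : ℝ) ≤ 1 / (n : ℝ) := by positivity
  calc ‖g‖ = (1 / (n : ℝ)) * ‖∑ i, e i • w i‖ := by
        rw [hg, norm_smul, Real.norm_eq_abs, abs_of_nonneg hninv]
    _ ≤ (1 / (n : ℝ)) * ∑ i, ‖e i • w i‖ :=
        mul_le_mul_of_nonneg_left (norm_sum_le _ _) hninv
    _ = (1 / (n : ℝ)) * ∑ i, e i * ‖w i‖ := by
        congr 1
        refine Finset.sum_congr rfl fun i _ => ?_
        rw [norm_smul, Real.norm_eq_abs, abs_of_pos (Real.exp_pos _)]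
    _ ≤ (1 / (n : ℝ)) * ∑ i, e i * N := by
        refine mul_le_mul_of_nonneg_left (Finset.sum_le_sum fun i _ => ?_) hninv
        exact mul_le_mul_of_nonneg_left (hwle i) (Real.exp_pos _).le
    _ = ((1 / (n : ℝ)) * ∑ i, e i) * N := by rw [← Finset.sum_mul]; ring
    _ = Fbar A₁ A₂ (Phi p₁ rstar) * N := by rw [hFbar]

end
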